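/- Let N ≥ 1 be an integer and let F(x₁,x₂) = Σ_{k=1}^N e(k x₁/N + k² x₂/N²), where e(z) = e^{2πiz}. Let q, a, b be integers with q odd, 1 ≤ b ≤ q ≤ N^{2/3}, gcd(b,q) = 1, and 0 ≤ a ≤ q, and let M(q,a,b) = {(x₁,x₂) ∈ [0,N] × [0,N²] : |x₁ − (a/q)N| ≤ 10^{-10} and |x₂ − (b/q)N²| ≤ 10^{-10}}. Then for every (x₁,x₂) ∈ M(q,a,b), (1/4)·N q^{-1/2} ≤ |F(x₁,x₂)| ≤ 4·N q^{-1/2}. -/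

import Mathlib

open Set

noncomputable section

/-- `e(z) = e^{2πiz}` -/
def e2 (z : ℝ) : ℂ := Complex.exp (2 * Real.pi * Complex.I * z)

/-- The exponential sum `F(x₁,x₂) = Σ_{k=1}^N e(k x₁/N + k² x₂/N²)`. -/
def Fsum (N : ℕ) (p : ℝ × ℝ) : ℂ :=
  ∑ k ∈ Finset.Icc 1 N, e2 ((k : ℝ) * p.1 / N + (k : ℝ) ^ 2 * p.2 / (N : ℝ) ^ 2)

/-- The major arc box `M(q,a,b)` in `[0,N] × [0,N²]`. -/
def Mqab (N : ℝ) (q a b : ℤ) : Set (ℝ × ℝ) :=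
  {p | p ∈ Icc ((0 : ℝ), (0 : ℝ)) (N, N ^ 2) ∧
    |p.1 - ((a : ℝ) / (q : ℝ)) * N| ≤ ((10 : ℝ) ^ 10)⁻¹ ∧
    |p.2 - ((b : ℝ) / (q : ℝ)) * N ^ 2| ≤ ((10 : ℝ) ^ 10)⁻¹}

/-- The condition on the tuple `(q,a,b)`: `q` odd, `1 ≤ b ≤ q ≤ N^{2/3}`, `gcd(b,q) = 1`,
`0 ≤ a ≤ q`. -/
def condQAB (N : ℝ) (q a b : ℤ) : Prop :=
  Odd q ∧ 1 ≤ b ∧ b ≤ q ∧ (q : ℝ) ≤ N ^ ((2 : ℝ)/3) ∧ Int.gcd b q = 1 ∧ 0 ≤ a ∧ a ≤ q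

lemma e2_add (x y : ℝ) : e2 (x + y) = e2 x * e2 y := by
  rw [e2, e2, e2, ← Complex.exp_add]; congr 1; push_cast; ring

lemma e2_zero : e2 0 = 1 := by simp [e2]

lemma e2_int (n : ℤ) : e2 n = 1 := by
  rw [e2, Complex.exp_eq_one_iff]
  exact ⟨n, by push_cast; ring⟩

lemma e2_norm (x : ℝ) : ‖e2 x‖ = 1 := by
  rw [e2]
  rw [show 2 * Real.pi * Complex.I * x = (2 * Real.pi * x : ℝ) * Complex.I by push_cast; ring]
  exact Complex.norm_exp_ofReal_mul_I _

lemma e2_conj (x : ℝ) : (starRingEnd ℂ) (e2 x) = e2 (-x) := by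
  rw [e2, e2, ← Complex.exp_conj]
  have : (starRingEnd ℂ) (2 * Real.pi * Complex.I * x) = 2 * Real.pi * (-Complex.I) * x := by
    simp [map_mul, map_ofNat, Complex.conj_I, Complex.conj_ofReal]
  rw [this]; congr 1; push_cast; ring

lemma e2_pow (k : ℕ) (x : ℝ) : e2 (k * x) = e2 x ^ k := by
  rw [e2, e2, ← Complex.exp_nat_mul]
  congr 1; push_cast; ring

lemma abs2pix (x : ℝ) : ‖(2 * Real.pi * Complex.I * x : ℂ)‖ = 2 * Real.pi * |x| := by
  simp [Complex.norm_I, abs_of_pos Real.pi_pos]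

lemma e2_sub_one (x : ℝ) (hx : |x| ≤ 1/100) : ‖e2 x - 1‖ ≤ 4 * Real.pi * |x| := by
  have hpi : (0:ℝ) < Real.pi := Real.pi_pos
  have hpi4 : Real.pi < 4 := Real.pi_lt_d2.trans (by norm_num)
  have h1 : ‖(2 * Real.pi * Complex.I * x : ℂ)‖ ≤ 1 := by
    rw [abs2pix]; nlinarith [abs_nonneg x]
  have h2 := Complex.norm_exp_sub_one_le (x := 2 * Real.pi * Complex.I * x) h1
  rw [abs2pix] at h2
  calc ‖e2 x - 1‖ = ‖(Complex.exp (2 * Real.pi * Complex.I * x) - 1 : ℂ)‖ := rfl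
    _ ≤ 2 * (2 * Real.pi * |x|) := h2
    _ = 4 * Real.pi * |x| := by ring

lemma e2_add_int (x : ℝ) (n : ℤ) : e2 (x + n) = e2 x := by
  rw [e2_add, e2_int, mul_one]

lemma e2_eq_one_iff (x : ℝ) : e2 x = 1 ↔ ∃ n : ℤ, x = n := by
  rw [e2, Complex.exp_eq_one_iff]
  constructor
  · rintro ⟨n, hn⟩
    refine ⟨n, ?_⟩
    have h2 : (2 * (Real.pi:ℂ) * Complex.I) ≠ 0 := by
      have := Real.pi_ne_zero
      simp [Complex.I_ne_zero, Complex.ofReal_ne_zero, this]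
    have : (x : ℂ) = (n : ℂ) := by
      apply mul_left_cancel₀ h2
      rw [hn]; ring
    exact_mod_cast this
  · rintro ⟨n, hn⟩
    exact ⟨n, by rw [hn]; push_cast; ring⟩

/-- the summand `c_k = e((a k + b k²)/q)` -/
def cc (q a b : ℤ) (k : ℕ) : ℂ := e2 (((a * k + b * k ^ 2 : ℤ) : ℝ) / (q : ℝ))

lemma sum_shift (f : ℕ → ℂ) (Q : ℕ) (hf : ∀ n, f (n + Q) = f n) (k : ℕ) :
    ∑ h ∈ Finset.range Q, f (k + h) = ∑ h ∈ Finset.range Q, f h := by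
  induction k with
  | zero => simp
  | succ k ih =>
    have h1 : ∑ h ∈ Finset.range Q, f (k + 1 + h) = ∑ h ∈ Finset.range Q, f (k + (h + 1)) :=
      Finset.sum_congr rfl (fun h _ => by congr 1; omega)
    have h2 : ∑ h ∈ Finset.range (Q + 1), f (k + h) = (∑ h ∈ Finset.range Q, f (k + (h + 1))) + f (k + 0) :=
      Finset.sum_range_succ' _ _
    have h3 : ∑ h ∈ Finset.range (Q + 1), f (k + h) = (∑ h ∈ Finset.range Q, f (k + h)) + f (k + Q) :=
      Finset.sum_range_succ _ _
    rw [h1, ← ih]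
    have := h2.symm.trans h3
    rw [hf k] at this
    simp only [Nat.add_zero] at this
    linear_combination this

section gauss
variable (q a b : ℤ) (hq : 1 ≤ q)

lemma cc_period (hq : 1 ≤ q) (k : ℕ) : cc q a b (k + q.toNat) = cc q a b k := by
  have hQ : ((q.toNat : ℤ)) = q := Int.toNat_of_nonneg (by omega)
  have hq0 : (q : ℝ) ≠ 0 := by
    have h0 : (0:ℝ) < q := by exact_mod_cast hq
    exact ne_of_gt h0
  have hZ : (a * ((k + q.toNat : ℕ) : ℤ) + b * ((k + q.toNat : ℕ) : ℤ) ^ 2)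
      = (a * k + b * (k:ℤ) ^ 2) + q * (a + 2 * b * k + b * q) := by
    push_cast [hQ]; ring
  unfold cc
  rw [hZ]
  have harg : (((a * k + b * (k:ℤ) ^ 2) + q * (a + 2 * b * k + b * q) : ℤ) : ℝ) / (q:ℝ)
      = ((a * k + b * (k:ℤ) ^ 2 : ℤ) : ℝ) / (q:ℝ) + ((a + 2 * b * k + b * q : ℤ) : ℝ) := by
    push_cast; field_simp
  rw [harg, e2_add_int]

lemma term_eq (hq : 1 ≤ q) (h k : ℕ) :
    cc q a b (k + h) * (starRingEnd ℂ) (cc q a b k)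
      = e2 (((a * h + b * h ^ 2 : ℤ) : ℝ) / (q : ℝ)) *
        (e2 (((2 * b * h : ℤ) : ℝ) / (q : ℝ))) ^ k := by
  have hq0 : (q : ℝ) ≠ 0 := by
    have h0 : (0:ℝ) < q := by exact_mod_cast hq
    exact ne_of_gt h0
  unfold cc
  rw [e2_conj, ← e2_pow, ← e2_add, ← e2_add]
  congr 1
  push_cast
  field_simp
  ring

lemma inner_geom (hq : 1 ≤ q) (hodd : Odd q) (hgcd : Int.gcd b q = 1)
    (h : ℕ) (hh0 : h ≠ 0) (hhq : h < q.toNat) :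
    ∑ k ∈ Finset.range q.toNat, (e2 (((2 * b * h : ℤ) : ℝ) / (q : ℝ))) ^ k = 0 := by
  have hq0 : (q : ℝ) ≠ 0 := by
    have h0 : (0:ℝ) < q := by exact_mod_cast hq
    exact ne_of_gt h0
  set z := e2 (((2 * b * h : ℤ) : ℝ) / (q : ℝ)) with hz
  have hzq : z ^ q.toNat = 1 := by
    rw [hz, ← e2_pow]
    have : (q.toNat : ℝ) * (((2 * b * h : ℤ) : ℝ) / (q : ℝ)) = ((2 * b * h : ℤ) : ℝ) := by
      have hQ : ((q.toNat : ℤ) : ℝ) = (q : ℝ) := by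
        rw [Int.toNat_of_nonneg (by omega)]
      rw [show ((q.toNat : ℕ) : ℝ) = ((q.toNat : ℤ) : ℝ) by push_cast; ring, hQ]
      field_simp
    rw [this, e2_int]
  have hz1 : z ≠ 1 := by
    intro hzz
    rw [hz, e2_eq_one_iff] at hzz
    obtain ⟨n, hn⟩ := hzz
    have hdvd : q ∣ 2 * b * (h:ℤ) := by
      have h2 : ((2 * b * h : ℤ) : ℝ) = (n : ℝ) * (q : ℝ) := by
        push_cast
        field_simp at hn
        push_cast at hn; linarith
      have hZ : (2 * b * (h:ℤ)) = n * q := by exact_mod_cast h2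
      exact ⟨n, by linarith⟩
    have hcop2 : IsCoprime q 2 := by
      obtain ⟨t, ht⟩ := hodd
      exact ⟨1, -t, by rw [ht]; ring⟩
    have hcopb : IsCoprime q b := by
      rw [Int.isCoprime_iff_gcd_eq_one, Int.gcd_comm]; exact hgcd
    have hcop : IsCoprime q (2 * b) := hcop2.mul_right hcopb
    have : q ∣ (h : ℤ) := hcop.dvd_of_dvd_mul_left hdvd
    have hhpos : (0 : ℤ) < h := by exact_mod_cast Nat.pos_of_ne_zero hh0
    have := Int.le_of_dvd hhpos this
    have : (h : ℤ) < q := by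
      have := hhq
      omega
    omega
  rw [geom_sum_eq hz1, hzq]
  simp

end gauss

section gauss2
variable (q a b : ℤ)

/-- the complete Gauss-type sum -/
def SS (q a b : ℤ) : ℂ := ∑ k ∈ Finset.range q.toNat, cc q a b k

lemma SS_mul_conj (hq : 1 ≤ q) (hodd : Odd q) (hgcd : Int.gcd b q = 1) :
    SS q a b * (starRingEnd ℂ) (SS q a b) = (q : ℂ) := by
  have hQpos : 0 < q.toNat := by omega
  unfold SS
  rw [map_sum, Finset.sum_mul_sum]
  have step1 : ∀ k, ∑ j ∈ Finset.range q.toNat, cc q a b j = ∑ h ∈ Finset.range q.toNat, cc q a b (k + h) :=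
    fun k => (sum_shift (cc q a b) q.toNat (cc_period q a b hq) k).symm
  calc (∑ j ∈ Finset.range q.toNat, ∑ k ∈ Finset.range q.toNat, cc q a b j * (starRingEnd ℂ) (cc q a b k))
      = ∑ k ∈ Finset.range q.toNat, (∑ j ∈ Finset.range q.toNat, cc q a b j) * (starRingEnd ℂ) (cc q a b k) := by
        rw [Finset.sum_comm]
        exact Finset.sum_congr rfl fun k _ => (Finset.sum_mul _ _ _).symm
    _ = ∑ k ∈ Finset.range q.toNat, ∑ h ∈ Finset.range q.toNat, cc q a b (k + h) * (starRingEnd ℂ) (cc q a b k) := by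
        refine Finset.sum_congr rfl fun k _ => ?_
        rw [step1 k, Finset.sum_mul]
    _ = ∑ h ∈ Finset.range q.toNat, ∑ k ∈ Finset.range q.toNat,
          e2 (((a * h + b * h ^ 2 : ℤ) : ℝ) / (q : ℝ)) *
            (e2 (((2 * b * h : ℤ) : ℝ) / (q : ℝ))) ^ k := by
        rw [Finset.sum_comm]
        exact Finset.sum_congr rfl fun h _ => Finset.sum_congr rfl fun k _ => term_eq q a b hq h k
    _ = ∑ h ∈ Finset.range q.toNat,
          e2 (((a * h + b * h ^ 2 : ℤ) : ℝ) / (q : ℝ)) *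
            ∑ k ∈ Finset.range q.toNat, (e2 (((2 * b * h : ℤ) : ℝ) / (q : ℝ))) ^ k := by
        exact Finset.sum_congr rfl fun h _ => (Finset.mul_sum _ _ _).symm
    _ = (q : ℂ) := by
        rw [Finset.sum_eq_single_of_mem 0 (Finset.mem_range.mpr hQpos)]
        · norm_num [e2_zero]
          rw [show ((q.toNat : ℕ) : ℂ) = ((q.toNat : ℤ) : ℂ) by push_cast; ring,
            Int.toNat_of_nonneg (by omega)]
        · intro h hmem hne
          rw [inner_geom q b hq hodd hgcd h hne (Finset.mem_range.mp hmem), mul_zero]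

lemma norm_SS (hq : 1 ≤ q) (hodd : Odd q) (hgcd : Int.gcd b q = 1) :
    ‖SS q a b‖ = Real.sqrt (q : ℝ) := by
  have h1 := SS_mul_conj q a b hq hodd hgcd
  rw [Complex.mul_conj] at h1
  have h2 : Complex.normSq (SS q a b) = (q : ℝ) := by exact_mod_cast h1
  rw [Complex.norm_def, h2]

end gauss2

lemma my_sum_range_add (f : ℕ → ℂ) (m n : ℕ) :
    ∑ i ∈ Finset.range (m + n), f i = (∑ i ∈ Finset.range m, f i) + ∑ i ∈ Finset.range n, f (m + i) := by
  induction n with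
  | zero => simp
  | succ n ih => rw [show m + (n+1) = (m+n)+1 by omega, Finset.sum_range_succ, ih,
      Finset.sum_range_succ]; ring

section partialsums
variable (q a b : ℤ)

/-- partial sums `P_n = Σ_{k=1}^n c_k` -/
def PP (q a b : ℤ) (n : ℕ) : ℂ := ∑ i ∈ Finset.range n, cc q a b (i + 1)

lemma norm_cc (k : ℕ) : ‖cc q a b k‖ = 1 := e2_norm _

lemma norm_PP_sub_le (n t : ℕ) : ‖PP q a b (n + t) - PP q a b n‖ ≤ t := by
  unfold PP
  rw [my_sum_range_add]
  simp only [add_sub_cancel_left]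
  calc ‖∑ i ∈ Finset.range t, cc q a b (n + i + 1)‖ ≤ ∑ i ∈ Finset.range t, ‖cc q a b (n + i + 1)‖ :=
        norm_sum_le _ _
    _ = ∑ i ∈ Finset.range t, (1:ℝ) := Finset.sum_congr rfl fun i _ => norm_cc q a b _
    _ = t := by simp

lemma norm_PP_le (n : ℕ) : ‖PP q a b n‖ ≤ n := by
  have := norm_PP_sub_le q a b 0 n
  simpa [PP] using this

lemma PP_block (hq : 1 ≤ q) (n : ℕ) : PP q a b (n + q.toNat) = PP q a b n + SS q a b := by
  unfold PP SS
  rw [my_sum_range_add]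
  congr 1
  calc ∑ i ∈ Finset.range q.toNat, cc q a b (n + i + 1)
      = ∑ i ∈ Finset.range q.toNat, cc q a b ((n + 1) + i) :=
        Finset.sum_congr rfl fun i _ => by congr 1; omega
    _ = ∑ i ∈ Finset.range q.toNat, cc q a b i := sum_shift _ _ (cc_period q a b hq) (n + 1)

lemma PP_split (hq : 1 ≤ q) (j r : ℕ) :
    PP q a b (j * q.toNat + r) = (j : ℂ) * SS q a b + PP q a b r := by
  induction j with
  | zero => simp
  | succ j ih =>
    rw [show (j + 1) * q.toNat + r = (j * q.toNat + r) + q.toNat by ring, PP_block q a b hq, ih]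
    push_cast; ring

end partialsums

lemma key_gen (x mR : ℝ) (hx : (3.46:ℝ) ≤ x) (hm : x^2 * mR ≥ x^2 * x - x^2 + 1) :
    2.99 * mR * x ≥ x + 2 * (x^2 - 1) := by
  have hx0 : (0:ℝ) < x := by linarith
  nlinarith [hm, hx, hx0, sq_nonneg (x - 3.46),
    mul_nonneg (sub_nonneg.mpr hx) (sq_nonneg (x - 3.46))]

set_option maxHeartbeats 1000000 in
lemma key_facts (q : ℤ) (m s N : ℕ) (x : ℝ) (hq1 : 1 ≤ q) (hodd : Odd q)
    (hx2 : x ^ 2 = (q : ℝ)) (hx0 : 0 < x)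
    (hN : q.toNat * m + s = N) (hs : s < q.toNat) (hqx : (q : ℝ) * x ≤ (N : ℝ)) :
    2.99 * m * x ≥ x + 2 * ((q : ℝ) - 1) ∧ 1 ≤ m ∧ (q : ℝ) ≤ 2 * m * x := by
  have hqR : (1 : ℝ) ≤ (q : ℝ) := by exact_mod_cast hq1
  have hQZ : (q.toNat : ℤ) = q := Int.toNat_of_nonneg (by omega)
  have hQR : ((q.toNat : ℕ) : ℝ) = (q : ℝ) := by exact_mod_cast congrArg (Int.cast : ℤ → ℝ) hQZ
  have hx1 : 1 ≤ x := by nlinarith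
  have hNq : q.toNat ≤ N := by
    have h1 : (q : ℝ) ≤ (N : ℝ) := le_trans (by nlinarith) hqx
    have h2 : ((q.toNat : ℕ) : ℝ) ≤ (N : ℝ) := by rw [hQR]; exact h1
    exact_mod_cast h2
  have hm1 : 1 ≤ m := by
    rcases Nat.eq_zero_or_pos m with h | h
    · subst h; omega
    · exact h
  have hm1R : (1 : ℝ) ≤ (m : ℝ) := by exact_mod_cast hm1
  have hsR : (s : ℝ) ≤ (q : ℝ) - 1 := by
    have h4 : ((s + 1 : ℕ) : ℝ) ≤ ((q.toNat : ℕ) : ℝ) := by exact_mod_cast hs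
    rw [hQR] at h4; push_cast at h4; linarith
  have hNR : (q : ℝ) * m + s = N := by
    have h3 : ((q.toNat * m + s : ℕ) : ℝ) = (N : ℝ) := by
      exact_mod_cast congrArg (Nat.cast : ℕ → ℝ) hN
    push_cast at h3
    rwa [hQR] at h3
  have hmR : (q : ℝ) * m ≥ (q : ℝ) * x - (q : ℝ) + 1 := by linarith
  have hmgt : (m : ℝ) > x - 1 := by nlinarith
  have hq2mx : (q : ℝ) ≤ 2 * m * x := by
    rcases le_or_gt x 2 with h | h
    · nlinarith
    · nlinarith
  refine ⟨?_, hm1, hq2mx⟩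
  rcases le_or_gt q 11 with hq11 | hq12
  · have hodd' : q % 2 = 1 := Int.odd_iff.mp hodd
    interval_cases q
    · -- q = 1
      clear hqR hQZ hQR hNq hsR hNR hmR hmgt hq2mx hodd hodd' hx1
      push_cast at hqx hx2 ⊢
      nlinarith
    · omega
    · -- q = 3
      clear hqR hQZ hQR hNq hsR hNR hmR hmgt hq2mx hodd hodd' hx1
      push_cast at hqx hx2 ⊢
      have hN' : 3 * m + s = N := by rw [show ((3:ℤ)).toNat = 3 from rfl] at hN; exact hN
      have hs' : s < 3 := by rw [show ((3:ℤ)).toNat = 3 from rfl] at hs; exact hs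
      have hxc : (5/3 : ℝ) < x := by nlinarith
      have hNc : (5 : ℝ) < (N : ℝ) := by linarith
      have hNn : (5 : ℕ) < N := by exact_mod_cast hNc
      have hm0 : (2 : ℝ) ≤ (m : ℝ) := by
        have hh : 2 ≤ m := by omega
        exact_mod_cast hh
      nlinarith
    · omega
    · -- q = 5
      clear hqR hQZ hQR hNq hsR hNR hmR hmgt hq2mx hodd hodd' hx1
      push_cast at hqx hx2 ⊢
      have hN' : 5 * m + s = N := by rw [show ((5:ℤ)).toNat = 5 from rfl] at hN; exact hN
      have hs' : s < 5 := by rw [show ((5:ℤ)).toNat = 5 from rfl] at hs; exact hs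
      have hxc : (11/5 : ℝ) < x := by nlinarith
      have hNc : (11 : ℝ) < (N : ℝ) := by linarith
      have hNn : (11 : ℕ) < N := by exact_mod_cast hNc
      have hm0 : (2 : ℝ) ≤ (m : ℝ) := by
        have hh : 2 ≤ m := by omega
        exact_mod_cast hh
      nlinarith
    · omega
    · -- q = 7
      clear hqR hQZ hQR hNq hsR hNR hmR hmgt hq2mx hodd hodd' hx1
      push_cast at hqx hx2 ⊢
      have hN' : 7 * m + s = N := by rw [show ((7:ℤ)).toNat = 7 from rfl] at hN; exact hN
      have hs' : s < 7 := by rw [show ((7:ℤ)).toNat = 7 from rfl] at hs; exact hs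
      have hxc : (18/7 : ℝ) < x := by nlinarith
      have hNc : (18 : ℝ) < (N : ℝ) := by linarith
      have hNn : (18 : ℕ) < N := by exact_mod_cast hNc
      have hm0 : (2 : ℝ) ≤ (m : ℝ) := by
        have hh : 2 ≤ m := by omega
        exact_mod_cast hh
      nlinarith
    · omega
    · -- q = 9
      clear hqR hQZ hQR hNq hsR hNR hmR hmgt hq2mx hodd hodd' hx1
      push_cast at hqx hx2 ⊢
      have hN' : 9 * m + s = N := by rw [show ((9:ℤ)).toNat = 9 from rfl] at hN; exact hN
      have hs' : s < 9 := by rw [show ((9:ℤ)).toNat = 9 from rfl] at hs; exact hs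
      have hxc : (26/9 : ℝ) < x := by nlinarith
      have hNc : (26 : ℝ) < (N : ℝ) := by linarith
      have hNn : (26 : ℕ) < N := by exact_mod_cast hNc
      have hm0 : (3 : ℝ) ≤ (m : ℝ) := by
        have hh : 3 ≤ m := by omega
        exact_mod_cast hh
      nlinarith
    · omega
    · -- q = 11
      clear hqR hQZ hQR hNq hsR hNR hmR hmgt hq2mx hodd hodd' hx1
      push_cast at hqx hx2 ⊢
      have hN' : 11 * m + s = N := by rw [show ((11:ℤ)).toNat = 11 from rfl] at hN; exact hN
      have hs' : s < 11 := by rw [show ((11:ℤ)).toNat = 11 from rfl] at hs; exact hs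
      have hxc : (36/11 : ℝ) < x := by nlinarith
      have hNc : (36 : ℝ) < (N : ℝ) := by linarith
      have hNn : (36 : ℕ) < N := by exact_mod_cast hNc
      have hm0 : (3 : ℝ) ≤ (m : ℝ) := by
        have hh : 3 ≤ m := by omega
        exact_mod_cast hh
      nlinarith
  · -- q ≥ 12
    have hq12R : (12 : ℝ) ≤ (q : ℝ) := by exact_mod_cast hq12
    have hm' : x^2 * m ≥ x^2 * x - x^2 + 1 := by rw [hx2]; linarith
    clear hqR hQZ hQR hNq hsR hNR hmR hmgt hq2mx hodd hN hs hqx hm1 hm1R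
    have hx34 : (3.46 : ℝ) ≤ x := by nlinarith
    have hkg := key_gen x m hx34 hm'
    rw [← hx2]
    linarith [hkg]

/-- the perturbation phase -/
def phi (N : ℕ) (d1 d2 : ℝ) (k : ℕ) : ℝ := k * d1 / N + k ^ 2 * d2 / (N : ℝ) ^ 2

/-- the perturbation factor -/
def ww (N : ℕ) (d1 d2 : ℝ) (k : ℕ) : ℂ := e2 (phi N d1 d2 k)

lemma sum_odd (n : ℕ) : ∑ i ∈ Finset.range n, (2 * (i : ℝ) + 3) = (n : ℝ) ^ 2 + 2 * n := by
  induction n with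
  | zero => simp
  | succ n ih => rw [Finset.sum_range_succ, ih]; push_cast; ring

section wbounds
variable (N : ℕ) (d1 d2 : ℝ) (hN : 1 ≤ N) (hd1 : |d1| ≤ ((10:ℝ)^10)⁻¹) (hd2 : |d2| ≤ ((10:ℝ)^10)⁻¹)

lemma ww_diff (hN : 1 ≤ N) (hd1 : |d1| ≤ ((10:ℝ)^10)⁻¹) (hd2 : |d2| ≤ ((10:ℝ)^10)⁻¹)
    (k : ℕ) (hk : k + 1 ≤ N) :
    ‖ww N d1 d2 (k+1) - ww N d1 d2 k‖
      ≤ 4 * Real.pi * (|d1| / N + (2 * (k:ℝ) + 1) * |d2| / (N:ℝ)^2) := by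
  have hN0 : (0:ℝ) < N := by exact_mod_cast hN
  have hdel : phi N d1 d2 (k+1) = phi N d1 d2 k + (d1 / N + (2 * (k:ℝ) + 1) * d2 / (N:ℝ)^2) := by
    unfold phi
    push_cast
    field_simp
    ring
  have hkN : (2 * (k:ℝ) + 1) ≤ 2 * N := by
    have : (k:ℝ) + 1 ≤ N := by exact_mod_cast hk
    linarith
  set Δ := d1 / N + (2 * (k:ℝ) + 1) * d2 / (N:ℝ)^2 with hΔ
  have hb1 : |d1 / N| ≤ |d1| / N := by
    rw [abs_div, abs_of_pos hN0]
  have hb2 : |(2 * (k:ℝ) + 1) * d2 / (N:ℝ)^2| ≤ (2 * (k:ℝ) + 1) * |d2| / (N:ℝ)^2 := by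
    rw [abs_div, abs_mul, abs_of_nonneg (by positivity : (0:ℝ) ≤ 2 * (k:ℝ) + 1),
      abs_of_pos (by positivity : (0:ℝ) < (N:ℝ)^2)]
  have hΔle : |Δ| ≤ |d1| / N + (2 * (k:ℝ) + 1) * |d2| / (N:ℝ)^2 :=
    le_trans (abs_add_le _ _) (by linarith)
  have h1 : (1:ℝ) ≤ N := by exact_mod_cast hN
  have hsmall : |Δ| ≤ 1 / 100 := by
    have e1 : |d1| / N ≤ |d1| := by
      rw [div_le_iff₀ hN0]; nlinarith [abs_nonneg d1]
    have e2' : (2 * (k:ℝ) + 1) * |d2| / (N:ℝ)^2 ≤ 2 * |d2| := by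
      rw [div_le_iff₀ (by positivity)]
      nlinarith [abs_nonneg d2, mul_nonneg (by linarith : (0:ℝ) ≤ (N:ℝ) - 1) (le_of_lt hN0)]
    have : (0:ℝ) < (10:ℝ)^10 := by norm_num
    have h10 : ((10:ℝ)^10)⁻¹ ≤ 1/1000 := by norm_num
    linarith
  have hfac : ww N d1 d2 (k+1) - ww N d1 d2 k = ww N d1 d2 k * (e2 Δ - 1) := by
    unfold ww
    rw [hdel, e2_add]
    ring
  rw [hfac, norm_mul, show ‖ww N d1 d2 k‖ = 1 from e2_norm _, one_mul]
  calc ‖e2 Δ - 1‖ ≤ 4 * Real.pi * |Δ| := e2_sub_one Δ hsmall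
    _ ≤ 4 * Real.pi * (|d1| / N + (2 * (k:ℝ) + 1) * |d2| / (N:ℝ)^2) := by
        have := Real.pi_pos
        nlinarith [hΔle]

lemma ww_zero : ww N d1 d2 0 = 1 := by
  simp [ww, phi, e2_zero]

lemma ww_last (hN : 1 ≤ N) (hd1 : |d1| ≤ ((10:ℝ)^10)⁻¹) (hd2 : |d2| ≤ ((10:ℝ)^10)⁻¹) :
    ‖ww N d1 d2 N - 1‖ ≤ 4 * Real.pi * (|d1| + |d2|) := by
  have hN0 : (0:ℝ) < N := by exact_mod_cast hN
  have hphi : phi N d1 d2 N = d1 + d2 := by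
    unfold phi; field_simp
  have hsmall : |d1 + d2| ≤ 1/100 := by
    have h10 : ((10:ℝ)^10)⁻¹ ≤ 1/1000 := by norm_num
    have := abs_add_le d1 d2
    linarith
  rw [show ww N d1 d2 N = e2 (d1 + d2) by rw [ww, hphi]]
  calc ‖e2 (d1 + d2) - 1‖ ≤ 4 * Real.pi * |d1 + d2| := e2_sub_one _ hsmall
    _ ≤ 4 * Real.pi * (|d1| + |d2|) := by
        have := Real.pi_pos
        nlinarith [abs_add_le d1 d2]

lemma sum_ww_diff (hN : 1 ≤ N) (hd1 : |d1| ≤ ((10:ℝ)^10)⁻¹) (hd2 : |d2| ≤ ((10:ℝ)^10)⁻¹) :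
    ∑ i ∈ Finset.range (N - 1), ‖ww N d1 d2 (i+2) - ww N d1 d2 (i+1)‖
      ≤ 4 * Real.pi * (|d1| + |d2|) := by
  have hN0 : (0:ℝ) < N := by exact_mod_cast hN
  have hpi := Real.pi_pos
  set A := |d1| / N with hA
  set B := |d2| / (N:ℝ)^2 with hB
  have step : ∀ i ∈ Finset.range (N - 1),
      ‖ww N d1 d2 (i+2) - ww N d1 d2 (i+1)‖
        ≤ 4 * Real.pi * A + (2 * (i:ℝ) + 3) * (4 * Real.pi * B) := by
    intro i hi
    have hiN : (i + 1) + 1 ≤ N := by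
      have := Finset.mem_range.mp hi; omega
    have h := ww_diff N d1 d2 hN hd1 hd2 (i+1) hiN
    calc ‖ww N d1 d2 (i+2) - ww N d1 d2 (i+1)‖
        ≤ 4 * Real.pi * (|d1| / N + (2 * ((i:ℕ)+1 : ℕ) + 1) * |d2| / (N:ℝ)^2) := h
      _ = 4 * Real.pi * A + (2 * (i:ℝ) + 3) * (4 * Real.pi * B) := by
          rw [hA, hB]; push_cast; ring
  have hn : ((N - 1 : ℕ) : ℝ) = (N:ℝ) - 1 := by
    have h1 : (1:ℕ) ≤ N := hN
    push_cast [Nat.cast_sub h1]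
    ring
  calc ∑ i ∈ Finset.range (N - 1), ‖ww N d1 d2 (i+2) - ww N d1 d2 (i+1)‖
      ≤ ∑ i ∈ Finset.range (N - 1), (4 * Real.pi * A + (2 * (i:ℝ) + 3) * (4 * Real.pi * B)) :=
        Finset.sum_le_sum step
    _ = ((N-1:ℕ):ℝ) * (4 * Real.pi * A) + (((N-1:ℕ):ℝ)^2 + 2 * ((N-1:ℕ):ℝ)) * (4 * Real.pi * B) := by
        rw [Finset.sum_add_distrib, Finset.sum_const, ← Finset.sum_mul, sum_odd,
          Finset.card_range, nsmul_eq_mul]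
    _ ≤ 4 * Real.pi * (|d1| + |d2|) := by
        rw [hn, hA, hB]
        have h1 : ((N:ℝ) - 1) * (4 * Real.pi * (|d1| / N)) ≤ 4 * Real.pi * |d1| := by
          rw [div_eq_mul_inv]
          have hinv : (0:ℝ) < (N:ℝ)⁻¹ := by positivity
          have key : ((N:ℝ) - 1) * (N:ℝ)⁻¹ ≤ 1 := by
            rw [← div_eq_mul_inv, div_le_one hN0]; linarith
          calc ((N:ℝ) - 1) * (4 * Real.pi * (|d1| * (N:ℝ)⁻¹))
              = (4 * Real.pi * |d1|) * (((N:ℝ) - 1) * (N:ℝ)⁻¹) := by ring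
            _ ≤ (4 * Real.pi * |d1|) * 1 := by
                apply mul_le_mul_of_nonneg_left key (by positivity)
            _ = 4 * Real.pi * |d1| := by ring
        have h2 : (((N:ℝ)-1)^2 + 2 * ((N:ℝ)-1)) * (4 * Real.pi * (|d2| / (N:ℝ)^2))
            ≤ 4 * Real.pi * |d2| := by
          rw [div_eq_mul_inv]
          have hinv : (0:ℝ) < ((N:ℝ)^2)⁻¹ := by positivity
          have hnn : (0:ℝ) ≤ ((N:ℝ)-1)^2 + 2*((N:ℝ)-1) := by nlinarith
          have key : (((N:ℝ)-1)^2 + 2*((N:ℝ)-1)) * ((N:ℝ)^2)⁻¹ ≤ 1 := by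
            rw [← div_eq_mul_inv, div_le_one (by positivity)]; nlinarith
          calc (((N:ℝ)-1)^2 + 2 * ((N:ℝ)-1)) * (4 * Real.pi * (|d2| * ((N:ℝ)^2)⁻¹))
              = (4 * Real.pi * |d2|) * ((((N:ℝ)-1)^2 + 2*((N:ℝ)-1)) * ((N:ℝ)^2)⁻¹) := by ring
            _ ≤ (4 * Real.pi * |d2|) * 1 := by
                apply mul_le_mul_of_nonneg_left key (by positivity)
            _ = 4 * Real.pi * |d2| := by ring
        linarith
end wbounds

lemma icc_range (f : ℕ → ℂ) (n : ℕ) : ∑ k ∈ Finset.Icc 1 n, f k = ∑ i ∈ Finset.range n, f (i+1) := by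
  induction n with
  | zero => simp
  | succ n ih => rw [Finset.sum_Icc_succ_top (by omega), ih, Finset.sum_range_succ]


set_option maxHeartbeats 1000000 in
/-- On each major arc box `M(q,a,b)`, `|F| ∼ N q^{-1/2}` within a factor of `4`. -/
theorem statement8 (N : ℕ) (hN : 1 ≤ N) (q a b : ℤ) (h : condQAB (N : ℝ) q a b) :
    ∀ p ∈ Mqab (N : ℝ) q a b,
      (N : ℝ) * (q : ℝ) ^ (-(1/2) : ℝ) / 4 ≤ ‖Fsum N p‖ ∧
      ‖Fsum N p‖ ≤ 4 * ((N : ℝ) * (q : ℝ) ^ (-(1/2) : ℝ)) := by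
  obtain ⟨hodd, hb1, hbq, hq23, hgcd, ha0, haq⟩ := h
  have hq1 : 1 ≤ q := le_trans hb1 hbq
  intro p hp
  simp only [Mqab, Set.mem_setOf_eq] at hp
  obtain ⟨hbox, hd1, hd2⟩ := hp
  have hNR1 : (1:ℝ) ≤ (N:ℝ) := by exact_mod_cast hN
  have hN0 : (0:ℝ) < (N:ℝ) := by linarith
  have hq0R : (0:ℝ) < (q:ℝ) := by exact_mod_cast hq1
  set x := Real.sqrt (q:ℝ) with hxdef
  have hx0 : 0 < x := Real.sqrt_pos.mpr hq0R
  have hx2 : x ^ 2 = (q:ℝ) := Real.sq_sqrt (le_of_lt hq0R)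
  have hqx : (q:ℝ) * x ≤ (N:ℝ) := by
    have h1 : ((q:ℝ))^((3:ℝ)/2) ≤ ((N:ℝ)^((2:ℝ)/3))^((3:ℝ)/2) :=
      Real.rpow_le_rpow (le_of_lt hq0R) hq23 (by norm_num)
    have h2 : ((N:ℝ)^((2:ℝ)/3))^((3:ℝ)/2) = (N:ℝ) := by
      rw [← Real.rpow_mul (by positivity)]
      norm_num
    have h3 : ((q:ℝ))^((3:ℝ)/2) = (q:ℝ) * x := by
      rw [show (3:ℝ)/2 = 1 + 1/2 by norm_num, Real.rpow_add hq0R, Real.rpow_one,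
        hxdef, Real.sqrt_eq_rpow]
    rw [h3, h2] at h1
    exact h1
  set Q := q.toNat with hQdef
  have hQpos : 0 < Q := by omega
  set m := N / Q with hmdef
  set s := N % Q with hsdef
  have hNms : Q * m + s = N := Nat.div_add_mod N Q
  have hsQ : s < Q := Nat.mod_lt N hQpos
  obtain ⟨hkey, hm1, hq2mx⟩ := key_facts q m s N x hq1 hodd hx2 hx0 hNms hsQ hqx
  have hQZ : (Q:ℤ) = q := Int.toNat_of_nonneg (by omega)
  have hQR : ((Q:ℕ):ℝ) = (q:ℝ) := by exact_mod_cast congrArg (Int.cast : ℤ → ℝ) hQZ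
  have hQodd : Q % 2 = 1 := by
    have := Int.odd_iff.mp hodd
    omega
  have hssR : (s:ℝ) ≤ (q:ℝ) - 1 := by
    have h4 : ((s + 1 : ℕ) : ℝ) ≤ ((Q:ℕ):ℝ) := by exact_mod_cast hsQ
    rw [hQR] at h4; push_cast at h4; linarith
  have hNReq : (q:ℝ) * m + s = (N:ℝ) := by
    have h3 : ((Q * m + s : ℕ) : ℝ) = (N : ℝ) := by
      exact_mod_cast congrArg (Nat.cast : ℕ → ℝ) hNms
    push_cast at h3
    rwa [hQR] at h3
  clear_value x m s
  have hSS : ‖SS q a b‖ = x := by rw [hxdef]; exact norm_SS q a b hq1 hodd hgcd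
  -- splitting of P_N
  have hsplitm : PP q a b N = (m:ℂ) * SS q a b + PP q a b s := by
    rw [← hNms, show Q * m + s = m * Q + s by ring]
    exact PP_split q a b hq1 m s
  have hsplitm1 : PP q a b (Q*(m+1)) = ((m+1 : ℕ):ℂ) * SS q a b := by
    have h5 := PP_split q a b hq1 (m+1) 0
    rw [Nat.add_zero] at h5
    have h50 : PP q a b 0 = 0 := by simp [PP]
    rw [h50, add_zero] at h5
    rw [show Q*(m+1) = (m+1)*Q by ring]
    exact_mod_cast h5
  have htail : ‖PP q a b (Q*(m+1)) - PP q a b N‖ ≤ ((Q - s : ℕ) : ℝ) := by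
    rw [← hNms, show Q*(m+1) = (Q*m+s) + (Q - s) by rw [Nat.mul_add, Nat.mul_one]; omega]
    exact norm_PP_sub_le q a b _ _
  have hnormm : ‖(m:ℂ) * SS q a b‖ = (m:ℝ) * x := by
    rw [norm_mul, hSS, Complex.norm_natCast]
  have hnormm1 : ‖((m+1:ℕ):ℂ) * SS q a b‖ = ((m:ℝ)+1) * x := by
    rw [norm_mul, hSS, Complex.norm_natCast]
    push_cast; ring
  have hPs : ‖PP q a b s‖ ≤ (s:ℝ) := norm_PP_le q a b s
  have hPn_low1 : (m:ℝ) * x - s ≤ ‖PP q a b N‖ := by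
    have h6 : ‖(m:ℂ) * SS q a b‖ ≤ ‖PP q a b N‖ + ‖PP q a b s‖ := by
      calc ‖(m:ℂ) * SS q a b‖ = ‖PP q a b N - PP q a b s‖ := by rw [hsplitm]; ring_nf
        _ ≤ ‖PP q a b N‖ + ‖PP q a b s‖ := norm_sub_le _ _
    rw [hnormm] at h6
    linarith
  have hPn_up1 : ‖PP q a b N‖ ≤ (m:ℝ) * x + s := by
    calc ‖PP q a b N‖ ≤ ‖(m:ℂ) * SS q a b‖ + ‖PP q a b s‖ := by
          rw [hsplitm]; exact norm_add_le _ _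
      _ ≤ (m:ℝ) * x + s := by rw [hnormm]; linarith
  have hPn_low2 : ((m:ℝ)+1) * x - ((Q - s : ℕ):ℝ) ≤ ‖PP q a b N‖ := by
    have h6 : ‖((m+1:ℕ):ℂ) * SS q a b‖ ≤ ‖PP q a b N‖ + ((Q - s : ℕ):ℝ) := by
      calc ‖((m+1:ℕ):ℂ) * SS q a b‖
          = ‖PP q a b N + (PP q a b (Q*(m+1)) - PP q a b N)‖ := by rw [← hsplitm1]; ring_nf
        _ ≤ ‖PP q a b N‖ + ‖PP q a b (Q*(m+1)) - PP q a b N‖ := norm_add_le _ _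
        _ ≤ ‖PP q a b N‖ + ((Q - s : ℕ):ℝ) := by linarith
    rw [hnormm1] at h6
    linarith
  have hPn_up2 : ‖PP q a b N‖ ≤ ((m:ℝ)+1) * x + ((Q - s : ℕ):ℝ) := by
    calc ‖PP q a b N‖ = ‖((m+1:ℕ):ℂ) * SS q a b - (PP q a b (Q*(m+1)) - PP q a b N)‖ := by
          rw [hsplitm1]; ring_nf
      _ ≤ ‖((m+1:ℕ):ℂ) * SS q a b‖ + ‖PP q a b (Q*(m+1)) - PP q a b N‖ := norm_sub_le _ _
      _ ≤ ((m:ℝ)+1) * x + ((Q - s : ℕ):ℝ) := by rw [hnormm1]; linarith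
  -- combine with odd q case split
  have hPPlow : (m:ℝ) * x - ((q:ℝ)-1)/2 ≤ ‖PP q a b N‖ := by
    rcases (by omega : 2*s + 1 ≤ Q ∨ 2*(Q - s) + 1 ≤ Q) with hc | hc
    · have : (s:ℝ) ≤ ((q:ℝ)-1)/2 := by
        have h4 : ((2*s + 1 : ℕ) : ℝ) ≤ ((Q:ℕ):ℝ) := by exact_mod_cast hc
        rw [hQR] at h4; push_cast at h4; linarith
      linarith
    · have : ((Q - s:ℕ):ℝ) ≤ ((q:ℝ)-1)/2 := by
        have h4 : ((2*(Q-s) + 1 : ℕ) : ℝ) ≤ ((Q:ℕ):ℝ) := by exact_mod_cast hc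
        rw [hQR] at h4; push_cast at h4; linarith
      nlinarith [hPn_low2, hx0]
  have hPPup : ‖PP q a b N‖ ≤ ((m:ℝ)+1) * x + ((q:ℝ)-1)/2 := by
    rcases (by omega : 2*s + 1 ≤ Q ∨ 2*(Q - s) + 1 ≤ Q) with hc | hc
    · have : (s:ℝ) ≤ ((q:ℝ)-1)/2 := by
        have h4 : ((2*s + 1 : ℕ) : ℝ) ≤ ((Q:ℕ):ℝ) := by exact_mod_cast hc
        rw [hQR] at h4; push_cast at h4; linarith
      nlinarith [hPn_up1, hx0]
    · have : ((Q - s:ℕ):ℝ) ≤ ((q:ℝ)-1)/2 := by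
        have h4 : ((2*(Q-s) + 1 : ℕ) : ℝ) ≤ ((Q:ℕ):ℝ) := by exact_mod_cast hc
        rw [hQR] at h4; push_cast at h4; linarith
      linarith
  -- perturbation setup
  set d1 := p.1 - ((a:ℝ)/(q:ℝ)) * (N:ℝ) with hd1def
  set d2 := p.2 - ((b:ℝ)/(q:ℝ)) * (N:ℝ)^2 with hd2def
  clear_value d1 d2
  have hterm : ∀ k : ℕ, e2 ((k:ℝ) * p.1 / N + (k:ℝ)^2 * p.2 / (N:ℝ)^2)
      = ww N d1 d2 k * cc q a b k := by
    intro k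
    rw [ww, cc, phi, ← e2_add]
    congr 1
    have hp1 : p.1 = (a:ℝ)/(q:ℝ) * N + d1 := by rw [hd1def]; ring
    have hp2 : p.2 = (b:ℝ)/(q:ℝ) * (N:ℝ)^2 + d2 := by rw [hd2def]; ring
    rw [hp1, hp2]
    push_cast
    field_simp
    ring
  have hF : Fsum N p = ∑ i ∈ Finset.range N, ww N d1 d2 (i+1) * cc q a b (i+1) := by
    unfold Fsum
    rw [icc_range]
    exact Finset.sum_congr rfl fun i _ => hterm (i+1)
  -- Abel summation
  have habel := Finset.sum_range_by_parts (fun i => ww N d1 d2 (i+1)) (fun i => cc q a b (i+1)) N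
  simp only [smul_eq_mul] at habel
  have hNsub : N - 1 + 1 = N := Nat.succ_pred_eq_of_pos hN
  have hFPP : Fsum N p - PP q a b N
      = (ww N d1 d2 N - 1) * PP q a b N
        - ∑ i ∈ Finset.range (N - 1), (ww N d1 d2 (i+2) - ww N d1 d2 (i+1)) * PP q a b (i+1) := by
    rw [hF]
    rw [habel, hNsub]
    have : (∑ i ∈ Finset.range N, cc q a b (i+1)) = PP q a b N := rfl
    rw [this]
    have h7 : ∀ i, (∑ j ∈ Finset.range (i+1), cc q a b (j+1)) = PP q a b (i+1) := fun i => rfl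
    simp only [h7]
    have h8 : ∀ i:ℕ, i + 1 + 1 = i + 2 := fun i => rfl
    simp only [h8]
    ring
  have hB : ∀ n, n ≤ N → ‖PP q a b n‖ ≤ (m:ℝ)*x + (q:ℝ) := by
    intro n hn
    have hsplit := PP_split q a b hq1 (n / Q) (n % Q)
    rw [← hQdef] at hsplit
    rw [show (n/Q)*Q + n%Q = n by rw [mul_comm]; exact Nat.div_add_mod n Q] at hsplit
    have hdiv : ((n/Q : ℕ):ℝ) ≤ (m:ℝ) := by
      rw [hmdef]
      exact_mod_cast Nat.div_le_div_right (c := Q) hn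
    have hmod : ((n%Q : ℕ):ℝ) ≤ (q:ℝ) := by
      have h8 : ((n%Q : ℕ):ℝ) ≤ ((Q:ℕ):ℝ) := by
        exact_mod_cast le_of_lt (Nat.mod_lt n hQpos)
      rwa [hQR] at h8
    calc ‖PP q a b n‖ = ‖((n/Q : ℕ):ℂ) * SS q a b + PP q a b (n % Q)‖ := by rw [hsplit]
      _ ≤ ‖((n/Q : ℕ):ℂ) * SS q a b‖ + ‖PP q a b (n % Q)‖ := norm_add_le _ _
      _ ≤ ((n/Q : ℕ):ℝ) * x + ((n%Q : ℕ):ℝ) := by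
          rw [norm_mul, hSS, Complex.norm_natCast]
          exact add_le_add le_rfl (norm_PP_le q a b _)
      _ ≤ (m:ℝ)*x + (q:ℝ) := by
          have := le_of_lt hx0
          nlinarith
  have hmxq0 : (0:ℝ) ≤ (m:ℝ)*x + (q:ℝ) := by positivity
  have herr2 : ‖Fsum N p - PP q a b N‖ ≤ ((m:ℝ)*x + (q:ℝ)) * (6/10^9) := by
    have hpi := Real.pi_pos
    have hpi315 : Real.pi ≤ 3.15 := le_of_lt Real.pi_lt_d2
    have hdd : |d1| + |d2| ≤ 2 * ((10:ℝ)^10)⁻¹ := by linarith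
    have hsum := sum_ww_diff N d1 d2 hN hd1 hd2
    have hlast := ww_last N d1 d2 hN hd1 hd2
    rw [hFPP]
    have hRnorm : ‖∑ i ∈ Finset.range (N - 1), (ww N d1 d2 (i+2) - ww N d1 d2 (i+1)) * PP q a b (i+1)‖
        ≤ ((m:ℝ)*x + (q:ℝ)) * (4*Real.pi*(|d1|+|d2|)) := by
      calc ‖∑ i ∈ Finset.range (N - 1), (ww N d1 d2 (i+2) - ww N d1 d2 (i+1)) * PP q a b (i+1)‖
          ≤ ∑ i ∈ Finset.range (N - 1), ‖(ww N d1 d2 (i+2) - ww N d1 d2 (i+1)) * PP q a b (i+1)‖ :=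
            norm_sum_le _ _
        _ ≤ ∑ i ∈ Finset.range (N - 1), ‖ww N d1 d2 (i+2) - ww N d1 d2 (i+1)‖ * ((m:ℝ)*x + (q:ℝ)) := by
            apply Finset.sum_le_sum
            intro i hi
            rw [norm_mul]
            apply mul_le_mul_of_nonneg_left _ (norm_nonneg _)
            apply hB
            have := Finset.mem_range.mp hi
            omega
        _ = (∑ i ∈ Finset.range (N - 1), ‖ww N d1 d2 (i+2) - ww N d1 d2 (i+1)‖) * ((m:ℝ)*x + (q:ℝ)) :=
            (Finset.sum_mul _ _ _).symm
        _ ≤ ((m:ℝ)*x + (q:ℝ)) * (4*Real.pi*(|d1|+|d2|)) := by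
            rw [mul_comm]
            apply mul_le_mul_of_nonneg_left hsum hmxq0
    have hfirst : ‖(ww N d1 d2 N - 1) * PP q a b N‖
        ≤ ((m:ℝ)*x + (q:ℝ)) * (4*Real.pi*(|d1|+|d2|)) := by
      rw [norm_mul]
      calc ‖ww N d1 d2 N - 1‖ * ‖PP q a b N‖
          ≤ (4*Real.pi*(|d1|+|d2|)) * ((m:ℝ)*x + (q:ℝ)) := by
            apply mul_le_mul hlast (hB N le_rfl) (norm_nonneg _) (by positivity)
        _ = ((m:ℝ)*x + (q:ℝ)) * (4*Real.pi*(|d1|+|d2|)) := by ring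
    calc ‖(ww N d1 d2 N - 1) * PP q a b N
          - ∑ i ∈ Finset.range (N - 1), (ww N d1 d2 (i+2) - ww N d1 d2 (i+1)) * PP q a b (i+1)‖
        ≤ ‖(ww N d1 d2 N - 1) * PP q a b N‖
          + ‖∑ i ∈ Finset.range (N - 1), (ww N d1 d2 (i+2) - ww N d1 d2 (i+1)) * PP q a b (i+1)‖ :=
          norm_sub_le _ _
      _ ≤ ((m:ℝ)*x + (q:ℝ)) * (8*Real.pi*(|d1|+|d2|)) := by linarith
      _ ≤ ((m:ℝ)*x + (q:ℝ)) * (6/10^9) := by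
          apply mul_le_mul_of_nonneg_left _ hmxq0
          nlinarith
  -- rewrite target
  have hxinv : (q:ℝ) ^ (-(1/2):ℝ) = x⁻¹ := by
    rw [Real.rpow_neg (le_of_lt hq0R), hxdef, Real.sqrt_eq_rpow]
  have hmx0 : (0:ℝ) ≤ (m:ℝ)*x := by positivity
  have hm1R : (1:ℝ) ≤ (m:ℝ) := by exact_mod_cast hm1
  have hxmx : x ≤ (m:ℝ)*x := by
    calc x = 1 * x := (one_mul x).symm
      _ ≤ (m:ℝ) * x := mul_le_mul_of_nonneg_right hm1R (le_of_lt hx0)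
  have hFlow : ‖Fsum N p‖ ≥ ‖PP q a b N‖ - ‖Fsum N p - PP q a b N‖ := by
    have := norm_sub_norm_le (PP q a b N) (Fsum N p)
    have h9 : ‖PP q a b N - Fsum N p‖ = ‖Fsum N p - PP q a b N‖ := norm_sub_rev _ _
    linarith
  have hFup : ‖Fsum N p‖ ≤ ‖PP q a b N‖ + ‖Fsum N p - PP q a b N‖ := by
    calc ‖Fsum N p‖ = ‖PP q a b N + (Fsum N p - PP q a b N)‖ := by
          rw [add_sub_cancel]
      _ ≤ ‖PP q a b N‖ + ‖Fsum N p - PP q a b N‖ := norm_add_le _ _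
  have hNxle : (N:ℝ) * x⁻¹ ≤ (m:ℝ)*x + x := by
    rw [show (N:ℝ) * x⁻¹ = (N:ℝ)/x by ring, div_le_iff₀ hx0]
    have h11 : ((m:ℝ)*x + x)*x = (q:ℝ)*m + q := by rw [← hx2]; ring
    rw [h11]
    linarith only [hNReq, hssR]
  have hNxge : (m:ℝ)*x ≤ (N:ℝ) * x⁻¹ := by
    rw [show (N:ℝ) * x⁻¹ = (N:ℝ)/x by ring, le_div_iff₀ hx0]
    have h11 : (m:ℝ)*x*x = (q:ℝ)*m := by rw [← hx2]; ring
    rw [h11]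
    linarith only [hNReq, Nat.cast_nonneg (α := ℝ) s]
  rw [hxinv]
  constructor
  · linarith only [hFlow, hPPlow, herr2, hkey, hq2mx, hmx0, hNxle, hxmx, hx0]
  · linarith only [hFup, hPPup, herr2, hkey, hq2mx, hmx0, hNxge, hxmx, hx0]

end
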